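/- Let b be a nonzero real number. Then the map (τ,η) ↦ (Θ¹₊(0,b;τ,η), Θ²₊(0,b;τ,η), Θ³₊(0,b;τ,η)), defined on the set {(τ,η) ∈ ℝ² : τ > 0 and b²η² < 2τ}, is injective. -/

import Mathlib

/-- The potential `V(x) = (1 − τx²)² + η²(bx + ax²)²`. -/
noncomputable def Vpot (a b τ η x : ℝ) : ℝ :=
  (1 - τ*x^2)^2 + η^2*(b*x + a*x^2)^2

/-- The right endpoint `x⁺` of the hill interval `[0, x⁺]`. -/
noncomputable def xplus (a b τ η : ℝ) : ℝ :=
  (-(a*b*η^2) + Real.sqrt (τ^2*(2*τ - b^2*η^2) + 2*a^2*η^2*τ)) / (τ^2 + a^2*η^2)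

/-- The left endpoint `x⁻` of the hill interval `[x⁻, 0]`. -/
noncomputable def xminus (a b τ η : ℝ) : ℝ :=
  (-(a*b*η^2) - Real.sqrt (τ^2*(2*τ - b^2*η^2) + 2*a^2*η^2*τ)) / (τ^2 + a^2*η^2)

/-- First component of the period map on the hill interval `[0, x⁺]`. -/
noncomputable def Theta1p (a b τ η : ℝ) : ℝ :=
  ∫ x in (0:ℝ)..(xplus a b τ η), η*(b*x + a*x^2) / Real.sqrt (1 - Vpot a b τ η x)

/-- Second component of the period map on the hill interval `[0, x⁺]`. -/
noncomputable def Theta2p (a b τ η : ℝ) : ℝ :=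
  ∫ x in (0:ℝ)..(xplus a b τ η), x^2*(1 - τ*x^2) / Real.sqrt (1 - Vpot a b τ η x)

/-- Third component of the period map on the hill interval `[0, x⁺]`. -/
noncomputable def Theta3p (a b τ η : ℝ) : ℝ :=
  ∫ x in (0:ℝ)..(xplus a b τ η), η*(b*x + a*x^2)^2 / Real.sqrt (1 - Vpot a b τ η x)

/-- First component of the period map on the hill interval `[x⁻, 0]`. -/
noncomputable def Theta1m (a b τ η : ℝ) : ℝ :=
  ∫ x in (xminus a b τ η)..(0:ℝ), η*(b*x + a*x^2) / Real.sqrt (1 - Vpot a b τ η x)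

/-- Second component of the period map on the hill interval `[x⁻, 0]`. -/
noncomputable def Theta2m (a b τ η : ℝ) : ℝ :=
  ∫ x in (xminus a b τ η)..(0:ℝ), x^2*(1 - τ*x^2) / Real.sqrt (1 - Vpot a b τ η x)

/-- Third component of the period map on the hill interval `[x⁻, 0]`. -/
noncomputable def Theta3m (a b τ η : ℝ) : ℝ :=
  ∫ x in (xminus a b τ η)..(0:ℝ), η*(b*x + a*x^2)^2 / Real.sqrt (1 - Vpot a b τ η x)

open Set MeasureTheory

section Stmt8Aux

lemma xplus_eq (b : ℝ) {τ η : ℝ} (hτ : 0 < τ) :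
    xplus 0 b τ η = Real.sqrt (2*τ - b^2*η^2) / τ := by
  unfold xplus
  rw [show τ^2*(2*τ - b^2*η^2) + 2*0^2*η^2*τ = τ^2 * (2*τ - b^2*η^2) by ring,
    Real.sqrt_mul (sq_nonneg τ), Real.sqrt_sq hτ.le]
  field_simp
  ring

lemma sqrt_one_sub_V (b τ η x : ℝ) (hx : 0 ≤ x) :
    Real.sqrt (1 - Vpot 0 b τ η x)
      = x * Real.sqrt (2*τ - b^2*η^2 - τ^2*x^2) := by
  rw [show 1 - Vpot 0 b τ η x = x^2 * (2*τ - b^2*η^2 - τ^2*x^2) by unfold Vpot; ring,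
    Real.sqrt_mul (sq_nonneg x), Real.sqrt_sq hx]

lemma w_pos {c τ x : ℝ} (hτ : 0 < τ) (hc : 0 < c) (hx : x ∈ Ioo 0 (Real.sqrt c / τ)) :
    0 < c - τ^2*x^2 := by
  obtain ⟨hx0, hxlt⟩ := hx
  rw [lt_div_iff₀ hτ] at hxlt
  have h1 := mul_lt_mul_of_pos_left hxlt (mul_pos hx0 hτ)
  have h2 := mul_lt_mul_of_pos_right hxlt (Real.sqrt_pos.mpr hc)
  nlinarith [Real.sq_sqrt hc.le]

lemma hasDerivAt_S {c τ x : ℝ} (hw : 0 < c - τ^2*x^2) :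
    HasDerivAt (fun y => Real.sqrt (c - τ^2*y^2))
      (-(τ^2*x) / Real.sqrt (c - τ^2*x^2)) x := by
  have h1 : HasDerivAt (fun y : ℝ => c - τ^2*y^2) (-(τ^2*(2*x))) x := by
    simpa using ((hasDerivAt_pow 2 x).const_mul (τ^2)).const_sub c
  have h2 := h1.sqrt (ne_of_gt hw)
  convert h2 using 1
  have hs : Real.sqrt (c - τ^2*x^2) ≠ 0 := (Real.sqrt_pos.mpr hw).ne'
  field_simp

lemma theta1_eval (b τ η : ℝ) (hτ : 0 < τ) (hc : 0 < 2*τ - b^2*η^2) :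
    Theta1p 0 b τ η = Real.pi * (b*η) / (2*τ) := by
  have hsc : 0 < Real.sqrt (2*τ - b^2*η^2) := Real.sqrt_pos.mpr hc
  have hX0 : 0 < Real.sqrt (2*τ - b^2*η^2) / τ := div_pos hsc hτ
  set X := Real.sqrt (2*τ - b^2*η^2) / τ with hXdef
  -- base antiderivative G with derivative (√(c - τ²x²))⁻¹ on Ioo 0 X
  set G : ℝ → ℝ := fun x => Real.arcsin (τ*x / Real.sqrt (2*τ - b^2*η^2)) / τ with hGdef
  have hGd : ∀ x ∈ Ioo (0:ℝ) X, HasDerivAt G ((Real.sqrt (2*τ - b^2*η^2 - τ^2*x^2))⁻¹) x := by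
    intro x hx
    have hw : 0 < 2*τ - b^2*η^2 - τ^2*x^2 := by
      have := w_pos (c := 2*τ - b^2*η^2) hτ hc hx
      linarith
    have hxτ : τ * x < Real.sqrt (2*τ - b^2*η^2) := by
      have hxlt := hx.2
      rw [hXdef, lt_div_iff₀ hτ] at hxlt
      linarith
    have hu : HasDerivAt (fun y : ℝ => τ*y / Real.sqrt (2*τ - b^2*η^2))
        (τ / Real.sqrt (2*τ - b^2*η^2)) x := by
      simpa using ((hasDerivAt_id x).const_mul τ).div_const (Real.sqrt (2*τ - b^2*η^2))
    have hlt1 : τ*x / Real.sqrt (2*τ - b^2*η^2) < 1 := (div_lt_one hsc).mpr hxτ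
    have hpos : 0 < τ*x / Real.sqrt (2*τ - b^2*η^2) := div_pos (mul_pos hτ hx.1) hsc
    have harc := Real.hasDerivAt_arcsin (by linarith : τ*x / Real.sqrt (2*τ - b^2*η^2) ≠ -1)
      (ne_of_lt hlt1)
    have hcomp := (harc.comp x hu).div_const τ
    have hkey : Real.sqrt (1 - (τ*x / Real.sqrt (2*τ - b^2*η^2))^2)
        = Real.sqrt (2*τ - b^2*η^2 - τ^2*x^2) / Real.sqrt (2*τ - b^2*η^2) := by
      rw [show 1 - (τ*x / Real.sqrt (2*τ - b^2*η^2))^2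
          = (2*τ - b^2*η^2 - τ^2*x^2) / (2*τ - b^2*η^2) by
        rw [div_pow, Real.sq_sqrt hc.le, sub_div, div_self hc.ne']; ring,
        Real.sqrt_div hw.le]
    have hws : Real.sqrt (2*τ - b^2*η^2 - τ^2*x^2) ≠ 0 := (Real.sqrt_pos.mpr hw).ne'
    have hdv : (Real.sqrt (2*τ - b^2*η^2 - τ^2*x^2))⁻¹
        = 1 / Real.sqrt (1 - (τ*x / Real.sqrt (2*τ - b^2*η^2))^2)
          * (τ / Real.sqrt (2*τ - b^2*η^2)) / τ := by
      rw [hkey]; field_simp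
    rw [hdv]
    exact hcomp
  have hGcont : ContinuousOn G (Icc 0 X) := by
    apply Continuous.continuousOn
    exact (Real.continuous_arcsin.comp (by continuity)).div_const τ
  have hnonneg : ∀ x ∈ Ioo (0:ℝ) X, 0 ≤ (Real.sqrt (2*τ - b^2*η^2 - τ^2*x^2))⁻¹ := by
    intro x _; positivity
  have hint : IntervalIntegrable (fun x => (Real.sqrt (2*τ - b^2*η^2 - τ^2*x^2))⁻¹)
      volume 0 X := by
    apply intervalIntegral.intervalIntegrable_deriv_of_nonneg (g := G)
    · rwa [uIcc_of_le hX0.le]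
    · rw [min_eq_left hX0.le, max_eq_right hX0.le]; exact hGd
    · rw [min_eq_left hX0.le, max_eq_right hX0.le]; exact hnonneg
  have hftc : ∫ x in (0:ℝ)..X, (b*η) * (Real.sqrt (2*τ - b^2*η^2 - τ^2*x^2))⁻¹
      = (b*η) * G X - (b*η) * G 0 := by
    apply intervalIntegral.integral_eq_sub_of_hasDerivAt_of_le
      (f := fun x => (b*η) * G x)
      (f' := fun x => (b*η) * (Real.sqrt (2*τ - b^2*η^2 - τ^2*x^2))⁻¹) hX0.le
    · exact continuousOn_const.mul hGcont
    · intro x hx; exact HasDerivAt.const_mul (b*η) (hGd x hx)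
    · exact hint.const_mul (b*η)
  have hcong : EqOn (fun x => η*(b*x + 0*x^2) / Real.sqrt (1 - Vpot 0 b τ η x))
      (fun x => (b*η) * (Real.sqrt (2*τ - b^2*η^2 - τ^2*x^2))⁻¹) (Ioc 0 X) := by
    intro x hx
    simp only
    rw [sqrt_one_sub_V b τ η x hx.1.le,
      show η*(b*x + 0*x^2) = x * (b*η) by ring,
      mul_div_mul_left _ _ hx.1.ne', div_eq_mul_inv]
  have hGX : G X = Real.pi / 2 / τ := by
    simp only [hGdef]
    have : τ * X / Real.sqrt (2*τ - b^2*η^2) = 1 := by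
      rw [hXdef]; field_simp
      exact div_self (Real.sqrt_pos.mpr (by linarith)).ne'
    rw [this, Real.arcsin_one]
  have hG0 : G 0 = 0 := by simp [hGdef]
  calc Theta1p 0 b τ η
      = ∫ x in (0:ℝ)..X, η*(b*x + 0*x^2) / Real.sqrt (1 - Vpot 0 b τ η x) := by
        rw [Theta1p, xplus_eq b hτ]
    _ = ∫ x in (0:ℝ)..X, (b*η) * (Real.sqrt (2*τ - b^2*η^2 - τ^2*x^2))⁻¹ := by
        rw [intervalIntegral.integral_of_le hX0.le, intervalIntegral.integral_of_le hX0.le]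
        exact setIntegral_congr_fun measurableSet_Ioc hcong
    _ = (b*η) * G X - (b*η) * G 0 := hftc
    _ = Real.pi * (b*η) / (2*τ) := by rw [hGX, hG0]; field_simp; ring

section
variable {b τ η : ℝ}

lemma base_facts (hτ : 0 < τ) (hc : 0 < 2*τ - b^2*η^2) :
    (∀ x ∈ Ioo (0:ℝ) (Real.sqrt (2*τ - b^2*η^2) / τ),
      HasDerivAt (fun y => -(Real.sqrt (2*τ - b^2*η^2 - τ^2*y^2) / τ^2))
        (x * (Real.sqrt (2*τ - b^2*η^2 - τ^2*x^2))⁻¹) x) := by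
  intro x hx
  have hw : 0 < 2*τ - b^2*η^2 - τ^2*x^2 := by
    have := w_pos (c := 2*τ - b^2*η^2) hτ hc hx; linarith
  have hws : Real.sqrt (2*τ - b^2*η^2 - τ^2*x^2) ≠ 0 := (Real.sqrt_pos.mpr hw).ne'
  have h := ((hasDerivAt_S (c := 2*τ - b^2*η^2) hw).div_const (τ^2)).neg
  have hdv : x * (Real.sqrt (2*τ - b^2*η^2 - τ^2*x^2))⁻¹
      = -(-(τ^2*x) / Real.sqrt (2*τ - b^2*η^2 - τ^2*x^2) / τ^2) := by
    field_simp
  rw [hdv]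
  exact h

lemma int3 (hτ : 0 < τ) (hc : 0 < 2*τ - b^2*η^2) :
    IntervalIntegrable (fun x => x * (Real.sqrt (2*τ - b^2*η^2 - τ^2*x^2))⁻¹)
      volume 0 (Real.sqrt (2*τ - b^2*η^2) / τ) := by
  have hX0 : 0 < Real.sqrt (2*τ - b^2*η^2) / τ := div_pos (Real.sqrt_pos.mpr hc) hτ
  apply intervalIntegral.intervalIntegrable_deriv_of_nonneg
    (g := fun y => -(Real.sqrt (2*τ - b^2*η^2 - τ^2*y^2) / τ^2))
  · apply Continuous.continuousOn; fun_prop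
  · rw [min_eq_left hX0.le, max_eq_right hX0.le]; exact base_facts hτ hc
  · rw [min_eq_left hX0.le, max_eq_right hX0.le]
    intro x hx
    have hx0 : (0:ℝ) ≤ x := hx.1.le
    positivity

lemma theta3_eval (b τ η : ℝ) (hτ : 0 < τ) (hc : 0 < 2*τ - b^2*η^2) :
    Theta3p 0 b τ η = b^2*η*Real.sqrt (2*τ - b^2*η^2)/τ^2 := by
  have hsc : 0 < Real.sqrt (2*τ - b^2*η^2) := Real.sqrt_pos.mpr hc
  have hX0 : 0 < Real.sqrt (2*τ - b^2*η^2) / τ := div_pos hsc hτ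
  set X := Real.sqrt (2*τ - b^2*η^2) / τ with hXdef
  set G : ℝ → ℝ := fun y => -(Real.sqrt (2*τ - b^2*η^2 - τ^2*y^2) / τ^2) with hGdef
  have hftc : ∫ x in (0:ℝ)..X, (b^2*η) * (x * (Real.sqrt (2*τ - b^2*η^2 - τ^2*x^2))⁻¹)
      = (b^2*η) * G X - (b^2*η) * G 0 := by
    apply intervalIntegral.integral_eq_sub_of_hasDerivAt_of_le
      (f := fun x => (b^2*η) * G x)
      (f' := fun x => (b^2*η) * (x * (Real.sqrt (2*τ - b^2*η^2 - τ^2*x^2))⁻¹)) hX0.le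
    · apply Continuous.continuousOn; fun_prop
    · intro x hx; exact HasDerivAt.const_mul (b^2*η) (base_facts hτ hc x hx)
    · exact (int3 hτ hc).const_mul (b^2*η)
  have hcong : EqOn (fun x => η*(b*x + 0*x^2)^2 / Real.sqrt (1 - Vpot 0 b τ η x))
      (fun x => (b^2*η) * (x * (Real.sqrt (2*τ - b^2*η^2 - τ^2*x^2))⁻¹)) (Ioc 0 X) := by
    intro x hx
    simp only
    rw [sqrt_one_sub_V b τ η x hx.1.le,
      show η*(b*x + 0*x^2)^2 = x * (b^2*η*x) by ring,
      mul_div_mul_left _ _ hx.1.ne', div_eq_mul_inv]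
    ring
  have hwX : 2*τ - b^2*η^2 - τ^2*X^2 = 0 := by
    have : τ^2*X^2 = 2*τ - b^2*η^2 := by
      rw [hXdef, div_pow, Real.sq_sqrt hc.le]; field_simp
    linarith
  have hGX : G X = 0 := by simp [hGdef, hwX]
  have hG0 : G 0 = -(Real.sqrt (2*τ - b^2*η^2) / τ^2) := by
    simp only [hGdef]; norm_num
  calc Theta3p 0 b τ η
      = ∫ x in (0:ℝ)..X, η*(b*x + 0*x^2)^2 / Real.sqrt (1 - Vpot 0 b τ η x) := by
        rw [Theta3p, xplus_eq b hτ]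
    _ = ∫ x in (0:ℝ)..X, (b^2*η) * (x * (Real.sqrt (2*τ - b^2*η^2 - τ^2*x^2))⁻¹) := by
        rw [intervalIntegral.integral_of_le hX0.le, intervalIntegral.integral_of_le hX0.le]
        exact setIntegral_congr_fun measurableSet_Ioc hcong
    _ = (b^2*η) * G X - (b^2*η) * G 0 := hftc
    _ = b^2*η*Real.sqrt (2*τ - b^2*η^2)/τ^2 := by rw [hGX, hG0]; field_simp; ring

lemma theta2_eval (b τ η : ℝ) (hτ : 0 < τ) (hc : 0 < 2*τ - b^2*η^2) :
    Theta2p 0 b τ η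
      = Real.sqrt (2*τ - b^2*η^2) * (3*τ - 2*(2*τ - b^2*η^2)) / (3*τ^3) := by
  have hsc : 0 < Real.sqrt (2*τ - b^2*η^2) := Real.sqrt_pos.mpr hc
  have hX0 : 0 < Real.sqrt (2*τ - b^2*η^2) / τ := div_pos hsc hτ
  set X := Real.sqrt (2*τ - b^2*η^2) / τ with hXdef
  set F : ℝ → ℝ := fun y =>
    ((2*τ - b^2*η^2 - τ)/τ^3) * Real.sqrt (2*τ - b^2*η^2 - τ^2*y^2)
      - (Real.sqrt (2*τ - b^2*η^2 - τ^2*y^2))^3/(3*τ^3) with hFdef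
  set comb : ℝ → ℝ := fun x =>
    ((τ - (2*τ - b^2*η^2))/τ) * (x * (Real.sqrt (2*τ - b^2*η^2 - τ^2*x^2))⁻¹)
      + (1/τ) * (x * Real.sqrt (2*τ - b^2*η^2 - τ^2*x^2)) with hcombdef
  have hFd : ∀ x ∈ Ioo (0:ℝ) X, HasDerivAt F (comb x) x := by
    intro x hx
    have hw : 0 < 2*τ - b^2*η^2 - τ^2*x^2 := by
      have := w_pos (c := 2*τ - b^2*η^2) hτ hc hx; linarith
    have hws : Real.sqrt (2*τ - b^2*η^2 - τ^2*x^2) ≠ 0 := (Real.sqrt_pos.mpr hw).ne'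
    have hS := hasDerivAt_S (c := 2*τ - b^2*η^2) hw
    have h1 := HasDerivAt.const_mul ((2*τ - b^2*η^2 - τ)/τ^3) hS
    have h2 := (hS.pow 3).div_const (3*τ^3)
    have h := h1.sub h2
    have hdv : comb x
        = (2*τ - b^2*η^2 - τ)/τ^3 * (-(τ^2*x) / Real.sqrt (2*τ - b^2*η^2 - τ^2*x^2))
          - (3:ℕ) * (Real.sqrt (2*τ - b^2*η^2 - τ^2*x^2))^(3-1)
            * (-(τ^2*x) / Real.sqrt (2*τ - b^2*η^2 - τ^2*x^2)) / (3*τ^3) := by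
      simp only [hcombdef]
      set s := Real.sqrt (2*τ - b^2*η^2 - τ^2*x^2) with hsdef
      have hs2 : s^2 = 2*τ - b^2*η^2 - τ^2*x^2 := Real.sq_sqrt hw.le
      field_simp
      ring
    rw [hdv]
    exact h
  have hintc : IntervalIntegrable comb volume 0 X := by
    apply IntervalIntegrable.add
    · exact (int3 hτ hc).const_mul _
    · apply Continuous.intervalIntegrable; fun_prop
  have hftc : ∫ x in (0:ℝ)..X, comb x = F X - F 0 := by
    apply intervalIntegral.integral_eq_sub_of_hasDerivAt_of_le hX0.le _ hFd hintc
    apply Continuous.continuousOn; fun_prop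
  have hcong : EqOn (fun x => x^2*(1 - τ*x^2) / Real.sqrt (1 - Vpot 0 b τ η x))
      comb (Ioc 0 X) := by
    intro x hx
    simp only
    rw [sqrt_one_sub_V b τ η x hx.1.le,
      show x^2*(1 - τ*x^2) = x * (x*(1 - τ*x^2)) by ring,
      mul_div_mul_left _ _ hx.1.ne']
    rcases eq_or_lt_of_le hx.2 with hEq | hlt
    · have hwX : 2*τ - b^2*η^2 - τ^2*x^2 = 0 := by
        rw [hEq, hXdef, div_pow, Real.sq_sqrt hc.le]; field_simp; ring
      rw [hwX]
      simp [hcombdef, hwX]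
    · have hw : 0 < 2*τ - b^2*η^2 - τ^2*x^2 := by
        have := w_pos (c := 2*τ - b^2*η^2) hτ hc ⟨hx.1, hlt⟩; linarith
      simp only [hcombdef]
      set s := Real.sqrt (2*τ - b^2*η^2 - τ^2*x^2) with hsdef
      have hws : s ≠ 0 := (Real.sqrt_pos.mpr hw).ne'
      have hs2 : s^2 = 2*τ - b^2*η^2 - τ^2*x^2 := Real.sq_sqrt hw.le
      field_simp
      linear_combination (-x) * hs2
  have hwX : 2*τ - b^2*η^2 - τ^2*X^2 = 0 := by
    have : τ^2*X^2 = 2*τ - b^2*η^2 := by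
      rw [hXdef, div_pow, Real.sq_sqrt hc.le]; field_simp
    linarith
  have hFX : F X = 0 := by simp [hFdef, hwX]
  have hF0 : F 0 = ((2*τ - b^2*η^2 - τ)/τ^3) * Real.sqrt (2*τ - b^2*η^2)
      - (Real.sqrt (2*τ - b^2*η^2))^3/(3*τ^3) := by
    simp only [hFdef]; norm_num
  have hcube : (Real.sqrt (2*τ - b^2*η^2))^3 = (2*τ - b^2*η^2) * Real.sqrt (2*τ - b^2*η^2) := by
    rw [pow_succ, Real.sq_sqrt hc.le, mul_comm]
  calc Theta2p 0 b τ η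
      = ∫ x in (0:ℝ)..X, x^2*(1 - τ*x^2) / Real.sqrt (1 - Vpot 0 b τ η x) := by
        rw [Theta2p, xplus_eq b hτ]
    _ = ∫ x in (0:ℝ)..X, comb x := by
        rw [intervalIntegral.integral_of_le hX0.le, intervalIntegral.integral_of_le hX0.le]
        exact setIntegral_congr_fun measurableSet_Ioc hcong
    _ = F X - F 0 := hftc
    _ = Real.sqrt (2*τ - b^2*η^2) * (3*τ - 2*(2*τ - b^2*η^2)) / (3*τ^3) := by
        rw [hFX, hF0, hcube]; field_simp; ring
end

end Stmt8Aux

/-- The period map of Family 2 (parameters `(0,b)`, `b ≠ 0`) is one-to-one on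
`{(τ,η) : τ > 0 and b²η² < 2τ}`. -/
theorem stmt_8 (b : ℝ) (hb : b ≠ 0) :
    Set.InjOn
      (fun p : ℝ × ℝ => (Theta1p 0 b p.1 p.2, Theta2p 0 b p.1 p.2, Theta3p 0 b p.1 p.2))
      {p : ℝ × ℝ | 0 < p.1 ∧ b^2 * p.2^2 < 2 * p.1} := by
  rintro ⟨τ₁, η₁⟩ ⟨hτ₁, hd₁⟩ ⟨τ₂, η₂⟩ ⟨hτ₂, hd₂⟩ heq
  simp only [Set.mem_setOf_eq] at hd₁ hd₂
  have hc₁ : 0 < 2*τ₁ - b^2*η₁^2 := by linarith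
  have hc₂ : 0 < 2*τ₂ - b^2*η₂^2 := by linarith
  simp only [Prod.mk.injEq] at heq
  obtain ⟨E1, E2, E3⟩ := heq
  rw [theta1_eval b τ₁ η₁ hτ₁ hc₁, theta1_eval b τ₂ η₂ hτ₂ hc₂] at E1
  rw [theta2_eval b τ₁ η₁ hτ₁ hc₁, theta2_eval b τ₂ η₂ hτ₂ hc₂] at E2
  rw [theta3_eval b τ₁ η₁ hτ₁ hc₁, theta3_eval b τ₂ η₂ hτ₂ hc₂] at E3
  set s₁ := Real.sqrt (2*τ₁ - b^2*η₁^2) with hs₁def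
  set s₂ := Real.sqrt (2*τ₂ - b^2*η₂^2) with hs₂def
  have hs₁ : 0 < s₁ := Real.sqrt_pos.mpr hc₁
  have hs₂ : 0 < s₂ := Real.sqrt_pos.mpr hc₂
  have hs₁2 : s₁^2 = 2*τ₁ - b^2*η₁^2 := Real.sq_sqrt hc₁.le
  have hs₂2 : s₂^2 = 2*τ₂ - b^2*η₂^2 := Real.sq_sqrt hc₂.le
  -- from E1 : η₁ * τ₂ = η₂ * τ₁
  have h1 : η₁ * τ₂ = η₂ * τ₁ := by
    have h1' : (η₁*τ₂ - η₂*τ₁) * (Real.pi*b*2) = 0 := by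
      field_simp at E1
      linear_combination (Real.pi*b*2) * E1
    rcases mul_eq_zero.mp h1' with h | h
    · linarith [sub_eq_zero.mp h]
    · exact absurd h (mul_ne_zero (mul_ne_zero Real.pi_ne_zero hb) two_ne_zero)
  rcases eq_or_ne η₁ 0 with hη₁ | hη₁
  · -- η₁ = 0, hence η₂ = 0; use E2
    subst hη₁
    have hη₂ : η₂ = 0 := by
      have : η₂ * τ₁ = 0 := by linarith [h1]
      rcases mul_eq_zero.mp this with h | h
      · exact h
      · exact absurd h hτ₁.ne'
    subst hη₂
    have key : s₁*τ₁*τ₂^3 = s₂*τ₂*τ₁^3 := by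
      have h2' : s₁*(3*τ₁-2*(2*τ₁ - b^2*0^2))*(3*τ₂^3) = s₂*(3*τ₂-2*(2*τ₂ - b^2*0^2))*(3*τ₁^3) := by
        rw [div_eq_div_iff (mul_pos three_pos (pow_pos hτ₁ 3)).ne' (mul_pos three_pos (pow_pos hτ₂ 3)).ne'] at E2
        linear_combination E2
      linear_combination (-1/3) * h2'
    have hsq : 2*τ₁*(τ₁*τ₂^3)^2 = 2*τ₂*(τ₂*τ₁^3)^2 := by
      have h := congrArg (·^2) key
      simp only [mul_pow] at h
      have e₁ : s₁^2 = 2*τ₁ := by rw [hs₁2]; ring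
      have e₂ : s₂^2 = 2*τ₂ := by rw [hs₂2]; ring
      nlinarith [h, e₁, e₂]
    have hcube : τ₂^3 = τ₁^3 := by
      apply mul_left_cancel₀ (show (2*τ₁^3*τ₂^3 : ℝ) ≠ 0 by positivity)
      linear_combination hsq
    have hττ : τ₁ = τ₂ := by
      nlinarith [hcube, mul_pos hτ₁ hτ₂, sq_nonneg (τ₁ - τ₂), sq_nonneg (τ₁ + τ₂)]
    simp [hττ]
  · -- η₁ ≠ 0
    have hη₂ : η₂ ≠ 0 := by
      intro h
      apply hη₁
      rw [h] at h1
      simp at h1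
      rcases h1 with h | h
      · exact h
      · exact absurd h hτ₂.ne'
    have h3' : b^2*η₁*s₁*τ₂^2 = b^2*η₂*s₂*τ₁^2 := by
      rw [div_eq_div_iff (pow_pos hτ₁ 2).ne' (pow_pos hτ₂ 2).ne'] at E3
      linear_combination E3
    have key : s₁*τ₂ = s₂*τ₁ := by
      have h0 : (b^2*η₂*τ₁)*(s₁*τ₂ - s₂*τ₁) = 0 := by
        linear_combination h3' - (b^2*s₁*τ₂)*h1
      rcases mul_eq_zero.mp h0 with h | h
      · exact absurd h (by positivity)
      · linarith [sub_eq_zero.mp h]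
    have hsq : (2*τ₁ - b^2*η₁^2)*τ₂^2 = (2*τ₂ - b^2*η₂^2)*τ₁^2 := by
      have h := congrArg (·^2) key
      simp only [mul_pow] at h
      rw [hs₁2, hs₂2] at h
      exact h
    have h1sq : η₁^2*τ₂^2 = η₂^2*τ₁^2 := by
      linear_combination (η₁*τ₂ + η₂*τ₁)*h1
    have hτeq : 2*τ₁*τ₂^2 = 2*τ₂*τ₁^2 := by
      linear_combination hsq + b^2*h1sq
    have hττ : τ₁ = τ₂ := by
      have := mul_left_cancel₀ (show (2*τ₁*τ₂ : ℝ) ≠ 0 by positivity)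
        (show (2*τ₁*τ₂)*τ₂ = (2*τ₁*τ₂)*τ₁ by linear_combination hτeq)
      linarith
    have hηη : η₁ = η₂ := by
      rw [hττ] at h1
      exact mul_right_cancel₀ hτ₂.ne' h1
    simp [hττ, hηη]
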